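/- arXiv:2010.02518 — 2 statements merged into one kernel-verified Lean document; each statement's English description precedes it below -/
import Mathlib

section
/- Concatenated construction: if there exists a strongly $\bar{d}$-separable code of length $t$, size $n$, over an alphabet of size $q$, then there exists a $d$-SSM of size $tq \times n$. Concretely, replacing each symbol $k \in \{0, \dots, q-1\}$ of each codeword by the binary indicator vector of length $q$ with a $1$ in position $k$ yields a binary $tq \times n$ matrix that is a $d$-SSM. -/
noncomputable def boolSum {ι : Type*} (F : Finset (ι → Bool)) : ι → Bool := F.sup id

def desc {t q : ℕ} (A : Finset (Fin t → Fin q)) : Set (Fin t → Fin q) :=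
  {x | ∀ i, ∃ c ∈ A, x i = c i}

/-- Concatenation: replace each symbol `k ∈ {0,…,q-1}` of a codeword by the
binary indicator vector of length `q` with a `1` in position `k`. -/
def expand {t q : ℕ} (c : Fin t → Fin q) : Fin t × Fin q → Bool :=
  fun p => decide (c p.1 = p.2)

lemma sup_bool_iff {α : Type*} (s : Finset α) (g : α → Bool) :
    s.sup g = true ↔ ∃ a ∈ s, g a = true := by
  classical
  induction s using Finset.induction with
  | empty => simp
  | insert a s h ih => simp [Finset.sup_insert, ih]

lemma expand_injective {t q : ℕ} : Function.Injective (expand (t := t) (q := q)) := by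
  intro c c' h
  funext i
  have := congrFun h (i, c i)
  simp [expand] at this
  exact this.symm

lemma boolSum_image {t q : ℕ} (A : Finset (Fin t → Fin q)) (i : Fin t) (j : Fin q) :
    boolSum (A.image expand) (i, j) = true ↔ ∃ c ∈ A, c i = j := by
  unfold boolSum
  rw [Finset.sup_apply, sup_bool_iff]
  constructor
  · rintro ⟨f, hf, hfv⟩
    obtain ⟨c, hc, rfl⟩ := Finset.mem_image.mp hf
    exact ⟨c, hc, by simpa [expand] using hfv⟩
  · rintro ⟨c, hc, hcij⟩
    exact ⟨expand c, Finset.mem_image_of_mem _ hc, by simp [expand, hcij]⟩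

/-- If there is a strongly `d̄`-separable `(t, n, q)` code, then the concatenated
construction yields a `d`-SSM of size `tq × n`. -/
theorem ssc_to_ssm {t q n d : ℕ} (hd : 2 ≤ d)
    (C : Finset (Fin t → Fin q)) (hcard : C.card = n)
    (hssc : ∀ C0 ⊆ C, 1 ≤ C0.card → C0.card ≤ d →
      ∀ C' ⊆ C, desc C' = desc C0 → C0 ⊆ C') :
    (C.image expand).card = n ∧
    (∀ F0 ⊆ C.image expand, 1 ≤ F0.card → F0.card ≤ d →
      ∀ F' ⊆ C.image expand, boolSum F' = boolSum F0 → F0 ⊆ F') := by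
  classical
  have hinj : Function.Injective (expand (t := t) (q := q)) := expand_injective
  refine ⟨by rw [Finset.card_image_of_injective _ hinj, hcard], ?_⟩
  intro F0 hF0 h1 h2 F' hF' hsum
  set C0 := C.filter (fun c => expand c ∈ F0) with hC0def
  set C2 := C.filter (fun c => expand c ∈ F') with hC2def
  have himg : ∀ (F : Finset (Fin t × Fin q → Bool)), F ⊆ C.image expand →
      F = (C.filter (fun c => expand c ∈ F)).image expand := by
    intro F hF
    apply Finset.Subset.antisymm
    · intro f hf
      obtain ⟨c, hc, rfl⟩ := Finset.mem_image.mp (hF hf)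
      exact Finset.mem_image_of_mem _ (Finset.mem_filter.mpr ⟨hc, hf⟩)
    · intro f hf
      obtain ⟨c, hc, rfl⟩ := Finset.mem_image.mp hf
      exact (Finset.mem_filter.mp hc).2
  have hF0eq : F0 = C0.image expand := himg F0 hF0
  have hF'eq : F' = C2.image expand := himg F' hF'
  have hcard0 : C0.card = F0.card := by
    rw [hF0eq, Finset.card_image_of_injective _ hinj]
  have hkey : ∀ i j, (∃ c ∈ C2, c i = j) ↔ ∃ c ∈ C0, c i = j := by
    intro i j
    rw [← boolSum_image, ← boolSum_image, ← hF0eq, ← hF'eq, hsum]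
  have hdesc : desc C2 = desc C0 := by
    ext x
    simp only [desc, Set.mem_setOf_eq]
    constructor
    · intro h i
      obtain ⟨c, hc, hxc⟩ := h i
      obtain ⟨c', hc', hcc'⟩ := (hkey i (c i)).mp ⟨c, hc, rfl⟩
      exact ⟨c', hc', hxc.trans hcc'.symm⟩
    · intro h i
      obtain ⟨c, hc, hxc⟩ := h i
      obtain ⟨c', hc', hcc'⟩ := (hkey i (c i)).mpr ⟨c, hc, rfl⟩
      exact ⟨c', hc', hxc.trans hcc'.symm⟩
  have hsub : C0 ⊆ C2 :=
    hssc C0 (Finset.filter_subset _ _) (by omega) (by omega) C2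
      (Finset.filter_subset _ _) hdesc
  intro f hf
  rw [hF0eq] at hf
  obtain ⟨c, hc, rfl⟩ := Finset.mem_image.mp hf
  exact (Finset.mem_filter.mp (hsub hc)).2
end

section
/- Minimal frame size bound: let $\mathcal{C}$ be a $(t,n,q)$ code and let $\mathcal{C}_0 \subseteq \mathcal{C}$ with $1 \le |\mathcal{C}_0| \le d$. Then any minimal frame $\mathcal{C}'$ of $\mathcal{C}_0$ satisfies $|\mathcal{C}'| \le td - t + 1$. -/
/-- Any minimal frame of a set `C₀` of at most `d` codewords has size at most
`td - t + 1`. -/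
theorem minimal_frame_card_bound {t q n d : ℕ} (hd : 1 ≤ d)
    (C : Finset (Fin t → Fin q)) (hcard : C.card = n)
    (C0 : Finset (Fin t → Fin q)) (hC0 : C0 ⊆ C)
    (h1 : 1 ≤ C0.card) (h2 : C0.card ≤ d)
    (C' : Finset (Fin t → Fin q)) (hC' : C' ⊆ C)
    (hframe : desc C' = desc C0)
    (hmin : ∀ c ∈ C', desc (C'.erase c) ≠ desc C0) :
    C'.card ≤ t * d - t + 1 := by
  classical
  rcases Nat.eq_zero_or_pos t with ht | ht
  · subst ht
    have h01 : C'.card ≤ 1 :=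
      Finset.card_le_one.mpr (fun a _ b _ => funext (fun i => i.elim0))
    simpa using h01
  haveI : Inhabited (Fin t) := ⟨⟨0, ht⟩⟩
  rcases C'.eq_empty_or_nonempty with he | ⟨c0, hc0⟩
  · simp [he]
  have hdescsub : ∀ c, desc (C'.erase c) ⊆ desc C' := by
    intro c x hx i
    obtain ⟨c', hc', heq⟩ := hx i
    exact ⟨c', Finset.mem_of_mem_erase hc', heq⟩
  have hcc' : ∀ c ∈ C', c ∈ desc C0 := by
    intro c hc
    rw [← hframe]
    exact fun i => ⟨c, hc, rfl⟩
  have huniq : ∀ c ∈ C', ∃ i : Fin t, ∀ c' ∈ C', c' i = c i → c' = c := by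
    intro c hc
    have hne : desc (C'.erase c) ≠ desc C' := by rw [hframe]; exact hmin c hc
    have hns : ¬ desc C' ⊆ desc (C'.erase c) :=
      fun h => hne (Set.Subset.antisymm (hdescsub c) h)
    obtain ⟨x, hx, hnx⟩ := Set.not_subset.mp hns
    rw [desc, Set.mem_setOf_eq] at hnx
    push_neg at hnx
    obtain ⟨i, hi⟩ := hnx
    refine ⟨i, ?_⟩
    obtain ⟨c'', hc'', heq⟩ := hx i
    have hcc : c'' = c := by
      by_contra hne'
      exact hi c'' (Finset.mem_erase.mpr ⟨hne', hc''⟩) heq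
    intro c' hc' hce
    by_contra hne'
    exact hi c' (Finset.mem_erase.mpr ⟨hne', hc'⟩) (by rw [hce, ← hcc, ← heq])
  set g : (Fin t → Fin q) → Fin t :=
    fun c => if h : ∃ i : Fin t, ∀ c' ∈ C', c' i = c i → c' = c then h.choose else default
    with hgdef
  have hg : ∀ c ∈ C', ∀ c' ∈ C', c' (g c) = c (g c) → c' = c := by
    intro c hc
    have h := huniq c hc
    simp only [hgdef, dif_pos h]
    exact h.choose_spec
  set f : (Fin t → Fin q) → (_ : Fin t) × Fin q := fun c => ⟨g c, c (g c)⟩ with hfdef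
  set T : Finset ((_ : Fin t) × Fin q) :=
    Finset.univ.sigma (fun i => (C0.image (fun c => c i)).erase (c0 i)) with hTdef
  have hmaps : ∀ c ∈ C'.erase c0, f c ∈ T := by
    intro c hc
    have hcC : c ∈ C' := Finset.mem_of_mem_erase hc
    have hnec0 : c ≠ c0 := Finset.ne_of_mem_erase hc
    rw [hTdef, Finset.mem_sigma]
    refine ⟨Finset.mem_univ _, Finset.mem_erase.mpr ⟨?_, ?_⟩⟩
    · intro hveq
      exact hnec0.symm (hg c hcC c0 hc0 hveq.symm)
    · obtain ⟨cc, hcc, heq⟩ := hcc' c hcC (g c)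
      exact Finset.mem_image.mpr ⟨cc, hcc, heq.symm⟩
  have hinj : Set.InjOn f (C'.erase c0) := by
    intro a ha b hb hfe
    have haC : a ∈ C' := Finset.mem_of_mem_erase ha
    have hbC : b ∈ C' := Finset.mem_of_mem_erase hb
    obtain ⟨h1, h2⟩ := Sigma.mk.inj_iff.mp hfe
    have h2' : a (g a) = b (g b) := eq_of_heq h2
    have h3 : a (g b) = b (g b) := by rw [h1] at h2'; exact h2'
    exact hg b hbC a haC h3
  have hcard1 : (C'.erase c0).card + 1 = C'.card := Finset.card_erase_add_one hc0
  have hle1 : (C'.erase c0).card ≤ T.card := Finset.card_le_card_of_injOn f hmaps hinj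
  have hTcard : T.card = ∑ i : Fin t, ((C0.image (fun c => c i)).erase (c0 i)).card :=
    Finset.card_sigma _ _
  have hterm : ∀ i : Fin t, ((C0.image (fun c => c i)).erase (c0 i)).card ≤ d - 1 := by
    intro i
    obtain ⟨cc, hcc, heq⟩ := hcc' c0 hc0 i
    have hmem : c0 i ∈ C0.image (fun c => c i) := Finset.mem_image.mpr ⟨cc, hcc, heq.symm⟩
    rw [Finset.card_erase_of_mem hmem]
    have : (C0.image (fun c => c i)).card ≤ d := le_trans (Finset.card_image_le) h2
    exact Nat.sub_le_sub_right this 1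
  have hsum : T.card ≤ t * (d - 1) := by
    rw [hTcard]
    calc ∑ i : Fin t, ((C0.image (fun c => c i)).erase (c0 i)).card
        ≤ ∑ _i : Fin t, (d - 1) := Finset.sum_le_sum (fun i _ => hterm i)
      _ = t * (d - 1) := by simp [Finset.sum_const, mul_comm]
  have hmul : t * (d - 1) + t = t * d := by
    have hdd : d - 1 + 1 = d := Nat.sub_add_cancel hd
    calc t * (d - 1) + t = t * ((d - 1) + 1) := (Nat.mul_succ _ _).symm
      _ = t * d := by rw [hdd]
  have hfin : t * (d - 1) = t * d - t := Nat.eq_sub_of_add_eq hmul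
  calc C'.card = (C'.erase c0).card + 1 := hcard1.symm
    _ ≤ T.card + 1 := Nat.add_le_add_right hle1 1
    _ ≤ t * (d - 1) + 1 := Nat.add_le_add_right hsum 1
    _ = t * d - t + 1 := by rw [hfin]
end
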